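/- arXiv:1208.2072 — 3 statements merged into one kernel-verified Lean document; each statement's English description precedes it below -/
import Mathlib

section
/- Let (X, μ) and (Y, ν) be σ-finite measure spaces and 1 < p < ∞ with conjugate exponent p′ (1/p + 1/p′ = 1). For functions a on X and b on Y write a ⊗ b for the function (x, y) ↦ a(x) b(y) on X × Y. Then for every bounded linear operator T on L^p(μ × ν), every ε > 0, and all finite collections ζ_1, …, ζ_m ∈ L^{p′}(μ × ν) and η_1, …, η_m ∈ L^p(μ × ν), there exist n ∈ ℕ and functions a_i ∈ L^{p′}(X, μ), b_i ∈ L^{p′}(Y, ν), c_i ∈ L^p(X, μ), d_i ∈ L^p(Y, ν) (1 ≤ i ≤ n) such that for every l = 1, …, m one has | ∫_{X×Y} ζ_l · (T η_l) d(μ×ν) − Σ_{i=1}^n ( ∫_{X×Y} (a_i ⊗ b_i) · η_l d(μ×ν) ) · ( ∫_{X×Y} ζ_l · (c_i ⊗ d_i) d(μ×ν) ) | < ε. -/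
open MeasureTheory
open scoped ENNReal


open MeasureTheory Set
open scoped ENNReal

section Aux

theorem conj_facts {p p' : ℝ≥0∞} (hp : 1 < p) (hptop : p ≠ ⊤) (hpp' : 1 / p + 1 / p' = 1) :
    1 < p' ∧ p' ≠ ⊤ := by
  have h1 : p⁻¹ < 1 := ENNReal.inv_lt_one.2 hp
  have h2 : p⁻¹ ≠ 0 := ENNReal.inv_ne_zero.2 hptop
  have h3 : p'⁻¹ = 1 - p⁻¹ := by
    rw [one_div, one_div] at hpp'
    exact ENNReal.eq_sub_of_add_eq (ENNReal.inv_ne_top.2 (zero_lt_one.trans hp).ne')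
      (by rw [add_comm]; exact hpp')
  constructor
  · rw [← ENNReal.inv_lt_one, h3]
    exact ENNReal.sub_lt_self ENNReal.one_ne_top one_ne_zero h2
  · rw [← ENNReal.inv_ne_zero, h3]
    simp [tsub_eq_zero_iff_le, not_le, hp, h1]

theorem dual_expand {k : ℕ} (φ : Module.Dual ℂ (Fin k → ℂ)) (x : Fin k → ℂ) :
    φ x = ∑ i, x i * φ (Pi.single i 1) := by
  conv_lhs => rw [← Finset.univ_sum_single x]
  rw [map_sum]
  refine Finset.sum_congr rfl fun i _ => ?_
  have : Pi.single i (x i) = x i • (Pi.single i (1 : ℂ) : Fin k → ℂ) := by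
    ext j
    rcases eq_or_ne j i with rfl | hne
    · simp
    · simp [Pi.single_apply, hne]
  rw [this, _root_.map_smul, smul_eq_mul]

end Aux

section Pairing

variable {α : Type*} [MeasurableSpace α] {M : Measure α}

theorem pairInt {q q' : ℝ≥0∞} (hconj : 1 / q + 1 / q' = 1) [Fact (1 ≤ q)] [Fact (1 ≤ q')]
    (w : Lp ℂ q' M) (g : Lp ℂ q M) :
    Integrable (fun z => (w : α → ℂ) z * (g : α → ℂ) z) M := by
  rw [← memLp_one_iff_integrable]
  haveI : ENNReal.HolderTriple q' q 1 := ⟨by rw [add_comm] at hconj; simpa [one_div] using hconj⟩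
  exact (Lp.memLp g).smul (Lp.memLp w) (r := 1)

/-- pairing linear map -/
noncomputable def pairingL {q q' : ℝ≥0∞} (hconj : 1 / q + 1 / q' = 1)
    [Fact (1 ≤ q)] [Fact (1 ≤ q')] {k : ℕ} (θ : Fin k → Lp ℂ q' M) :
    Lp ℂ q M →ₗ[ℂ] (Fin k → ℂ) where
  toFun g := fun i => ∫ z, (θ i : α → ℂ) z * (g : α → ℂ) z ∂M
  map_add' g₁ g₂ := by
    funext i
    have hae : ∀ᵐ z ∂M, (θ i : α → ℂ) z * ((g₁ + g₂ : Lp ℂ q M) : α → ℂ) z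
        = (θ i : α → ℂ) z * (g₁ : α → ℂ) z + (θ i : α → ℂ) z * (g₂ : α → ℂ) z := by
      filter_upwards [Lp.coeFn_add g₁ g₂] with z hz
      rw [hz, Pi.add_apply, mul_add]
    show (∫ z, (θ i : α → ℂ) z * ((g₁ + g₂ : Lp ℂ q M) : α → ℂ) z ∂M) = _
    rw [integral_congr_ae hae, integral_add (pairInt hconj _ _) (pairInt hconj _ _)]
    rfl
  map_smul' c g := by
    funext i
    have hae : ∀ᵐ z ∂M, (θ i : α → ℂ) z * ((c • g : Lp ℂ q M) : α → ℂ) z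
        = c * ((θ i : α → ℂ) z * (g : α → ℂ) z) := by
      filter_upwards [Lp.coeFn_smul c g] with z hz
      rw [hz, Pi.smul_apply, smul_eq_mul]; ring
    show (∫ z, (θ i : α → ℂ) z * ((c • g : Lp ℂ q M) : α → ℂ) z ∂M) = _
    rw [integral_congr_ae hae, integral_const_mul]
    rfl

theorem pairingL_apply {q q' : ℝ≥0∞} (hconj : 1 / q + 1 / q' = 1)
    [Fact (1 ≤ q)] [Fact (1 ≤ q')] {k : ℕ} (θ : Fin k → Lp ℂ q' M)
    (g : Lp ℂ q M) (i : Fin k) :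
    pairingL hconj θ g i = ∫ z, (θ i : α → ℂ) z * (g : α → ℂ) z ∂M := rfl

theorem pairing_smul {q q' : ℝ≥0∞} (hconj : 1 / q + 1 / q' = 1)
    [Fact (1 ≤ q)] [Fact (1 ≤ q')] (c : ℂ) (w : Lp ℂ q' M) (u : Lp ℂ q M) :
    ∫ z, ((c • w : Lp ℂ q' M) : α → ℂ) z * (u : α → ℂ) z ∂M
      = c * ∫ z, (w : α → ℂ) z * (u : α → ℂ) z ∂M := by
  have hae : ∀ᵐ z ∂M, ((c • w : Lp ℂ q' M) : α → ℂ) z * (u : α → ℂ) z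
      = c * ((w : α → ℂ) z * (u : α → ℂ) z) := by
    filter_upwards [Lp.coeFn_smul c w] with z hz
    rw [hz, Pi.smul_apply, smul_eq_mul]; ring
  rw [integral_congr_ae hae, integral_const_mul]

theorem pairing_sum {q q' : ℝ≥0∞} (hconj : 1 / q + 1 / q' = 1)
    [Fact (1 ≤ q)] [Fact (1 ≤ q')] {ι : Type*} (F : Finset ι)
    (θ : ι → Lp ℂ q' M) (u : Lp ℂ q M) :
    ∫ z, ((∑ i ∈ F, θ i : Lp ℂ q' M) : α → ℂ) z * (u : α → ℂ) z ∂M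
      = ∑ i ∈ F, ∫ z, (θ i : α → ℂ) z * (u : α → ℂ) z ∂M := by
  classical
  induction F using Finset.induction with
  | empty =>
    simp only [Finset.sum_empty]
    have : ∀ᵐ z ∂M, ((0 : Lp ℂ q' M) : α → ℂ) z * (u : α → ℂ) z = 0 := by
      filter_upwards [Lp.coeFn_zero ℂ q' M] with z hz
      rw [hz]; simp
    rw [integral_congr_ae this, integral_zero]
  | insert _ _ hnotmem ih =>
    rename_i a F'
    rw [Finset.sum_insert hnotmem, Finset.sum_insert hnotmem, ← ih]
    have : ∀ᵐ z ∂M, ((θ a + ∑ i ∈ F', θ i : Lp ℂ q' M) : α → ℂ) z * (u : α → ℂ) z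
        = (θ a : α → ℂ) z * (u : α → ℂ) z
          + ((∑ i ∈ F', θ i : Lp ℂ q' M) : α → ℂ) z * (u : α → ℂ) z := by
      filter_upwards [Lp.coeFn_add (θ a) (∑ i ∈ F', θ i)] with z hz
      rw [hz, Pi.add_apply, add_mul]
    rw [integral_congr_ae this, integral_add (pairInt hconj _ _) (pairInt hconj _ _)]

end Pairing

section Prod

variable {X Y : Type*} [MeasurableSpace X] [MeasurableSpace Y]
  {μ : Measure X} {ν : Measure Y} [SigmaFinite μ] [SigmaFinite ν]

theorem sep {q : ℝ≥0∞} (hq0 : q ≠ 0) (hqtop : q ≠ ⊤) [Fact (1 ≤ q)]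
    (h : Lp ℂ q (μ.prod ν))
    (hz : ∀ (A : Set X) (B : Set Y), MeasurableSet A → MeasurableSet B →
      μ A ≠ ∞ → ν B ≠ ∞ → ∫ z in A ×ˢ B, (h : X × Y → ℂ) z ∂(μ.prod ν) = 0) :
    h = 0 := by
  have hq1 : 1 ≤ q := Fact.out
  have hint : ∀ s : Set (X × Y), (μ.prod ν) s < ∞ →
      IntegrableOn (h : X × Y → ℂ) s (μ.prod ν) := by
    intro s hs
    haveI : Fact ((μ.prod ν) s < ∞) := ⟨hs⟩
    exact ((Lp.memLp h).restrict s).integrable hq1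
  set R : ℕ → Set (X × Y) := fun n => spanningSets μ n ×ˢ spanningSets ν n with hR
  have hRmeas : ∀ n, MeasurableSet (R n) :=
    fun n => (measurableSet_spanningSets μ n).prod (measurableSet_spanningSets ν n)
  have hRfin : ∀ n, (μ.prod ν) (R n) < ∞ := by
    intro n
    rw [hR]
    simp only [Measure.prod_prod]
    exact ENNReal.mul_lt_top (measure_spanningSets_lt_top μ n)
      (measure_spanningSets_lt_top ν n)
  have hRzero : ∀ n, ∫ z in R n, (h : X × Y → ℂ) z ∂(μ.prod ν) = 0 :=
    fun n => hz _ _ (measurableSet_spanningSets μ n) (measurableSet_spanningSets ν n)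
      (measure_spanningSets_lt_top μ n).ne (measure_spanningSets_lt_top ν n).ne
  have step1 : ∀ n, ∀ s : Set (X × Y), MeasurableSet s →
      ∫ z in s ∩ R n, (h : X × Y → ℂ) z ∂(μ.prod ν) = 0 := by
    intro n
    have := MeasurableSpace.induction_on_inter (m := Prod.instMeasurableSpace)
      (C := fun s _ => ∫ z in s ∩ R n, (h : X × Y → ℂ) z ∂(μ.prod ν) = 0)
      generateFrom_prod.symm isPiSystem_prod ?_ ?_ ?_ ?_
    · exact fun s hs => this s hs
    · simp
    · rintro t ⟨A, hA, B, hB, rfl⟩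
      rw [hR, prod_inter_prod]
      exact hz _ _ (hA.inter (measurableSet_spanningSets μ n))
        (hB.inter (measurableSet_spanningSets ν n))
        (((measure_mono (inter_subset_right)).trans_lt
          (measure_spanningSets_lt_top μ n)).ne)
        (((measure_mono (inter_subset_right)).trans_lt
          (measure_spanningSets_lt_top ν n)).ne)
    · intro t ht hCt
      have hsub : t ∩ R n ⊆ R n := inter_subset_right
      have : tᶜ ∩ R n = R n \ (t ∩ R n) := by
        ext z; by_cases hz : z ∈ t <;> simp [hz]
      rw [this, integral_diff (ht.inter (hRmeas n)) (hint _ (hRfin n)) hsub, hCt,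
        hRzero n, sub_zero]
    · intro f hdisj hmeas hC
      have : (⋃ i, f i) ∩ R n = ⋃ i, f i ∩ R n := by rw [iUnion_inter]
      rw [this, integral_iUnion (fun i => (hmeas i).inter (hRmeas n))
        (hdisj.mono fun i j hij => hij.mono inter_subset_left inter_subset_left)
        ((hint _ (hRfin n)).mono_set (iUnion_subset fun i => inter_subset_right))]
      simp [hC]
  have step2 : ∀ s : Set (X × Y), MeasurableSet s → (μ.prod ν) s < ∞ →
      ∫ z in s, (h : X × Y → ℂ) z ∂(μ.prod ν) = 0 := by
    intro s hs hsfin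
    have hmono : Monotone fun n => s ∩ R n := fun i j hij =>
      inter_subset_inter_right _ (Set.prod_mono (monotone_spanningSets μ hij)
        (monotone_spanningSets ν hij))
    have hunion : ⋃ n, s ∩ R n = s := by
      rw [← inter_iUnion]
      have : ⋃ n, R n = univ := by
        apply eq_univ_of_forall
        intro z
        rcases mem_iUnion.1 (by rw [iUnion_spanningSets]; trivial :
          z.1 ∈ ⋃ n, spanningSets μ n) with ⟨n₁, hn₁⟩
        rcases mem_iUnion.1 (by rw [iUnion_spanningSets]; trivial :
          z.2 ∈ ⋃ n, spanningSets ν n) with ⟨n₂, hn₂⟩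
        exact mem_iUnion.2 ⟨max n₁ n₂, Set.mem_prod.2
          ⟨monotone_spanningSets μ (le_max_left _ _) hn₁,
           monotone_spanningSets ν (le_max_right _ _) hn₂⟩⟩
      rw [this, inter_univ]
    have := tendsto_setIntegral_of_monotone (fun n => hs.inter (hRmeas n)) hmono
      (by rw [hunion]; exact hint _ hsfin)
    rw [hunion] at this
    have h0 : ∀ n, ∫ z in s ∩ R n, (h : X × Y → ℂ) z ∂(μ.prod ν) = 0 :=
      fun n => step1 n s hs
    simp only [h0] at this
    exact (tendsto_nhds_unique tendsto_const_nhds this).symm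
  rw [Lp.eq_zero_iff_ae_eq_zero]
  exact Lp.ae_eq_zero_of_forall_setIntegral_eq_zero h hq0 hqtop
    (fun s _ hsfin => hint s hsfin) step2

variable (μ ν) in
/-- elementary tensors in `Lp` of a product measure -/
def tSet (q : ℝ≥0∞) [Fact (1 ≤ q)] : Set (Lp ℂ q (μ.prod ν)) :=
  {w | ∃ (a : Lp ℂ q μ) (b : Lp ℂ q ν),
    (w : X × Y → ℂ) =ᵐ[μ.prod ν] fun z => (a : X → ℂ) z.1 * (b : Y → ℂ) z.2}

theorem indicator_mem_tSet {q : ℝ≥0∞} [Fact (1 ≤ q)] {A : Set X} {B : Set Y}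
    (hA : MeasurableSet A) (hB : MeasurableSet B) (hμA : μ A ≠ ∞) (hνB : ν B ≠ ∞)
    (hAB : (μ.prod ν) (A ×ˢ B) ≠ ∞) :
    indicatorConstLp q (hA.prod hB) hAB (1 : ℂ) ∈ tSet μ ν q := by
  refine ⟨indicatorConstLp q hA hμA (1 : ℂ), indicatorConstLp q hB hνB (1 : ℂ), ?_⟩
  have h1 : (fun z : X × Y => (indicatorConstLp q hA hμA (1 : ℂ) : X → ℂ) z.1)
      =ᵐ[μ.prod ν] fun z : X × Y => A.indicator (fun _ => (1 : ℂ)) z.1 :=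
    MeasureTheory.Measure.quasiMeasurePreserving_fst.ae_eq_comp
      (indicatorConstLp_coeFn (p := q) (hs := hA) (hμs := hμA) (c := (1:ℂ)))
  have h2 : (fun z : X × Y => (indicatorConstLp q hB hνB (1 : ℂ) : Y → ℂ) z.2)
      =ᵐ[μ.prod ν] fun z : X × Y => B.indicator (fun _ => (1 : ℂ)) z.2 :=
    MeasureTheory.Measure.quasiMeasurePreserving_snd.ae_eq_comp
      (indicatorConstLp_coeFn (p := q) (hs := hB) (hμs := hνB) (c := (1:ℂ)))
  filter_upwards [indicatorConstLp_coeFn (p := q) (hs := hA.prod hB) (hμs := hAB)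
    (c := (1:ℂ)), h1, h2] with z hz hz1 hz2
  rw [hz, hz1, hz2]
  by_cases h1 : z.1 ∈ A <;> by_cases h2 : z.2 ∈ B <;>
    simp [Set.indicator, Set.mem_prod, h1, h2]

theorem annihilator_vanish {q q' : ℝ≥0∞} [Fact (1 ≤ q)] [Fact (1 ≤ q')]
    (hconj : 1 / q + 1 / q' = 1)
    (hq'0 : q' ≠ 0) (hq'top : q' ≠ ⊤)
    {k : ℕ} (θ : Fin k → Lp ℂ q' (μ.prod ν)) (φ : Module.Dual ℂ (Fin k → ℂ))
    (hφ : ∀ t ∈ tSet μ ν q, φ (pairingL hconj θ t) = 0) :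
    (∑ i, φ (Pi.single i 1) • θ i = 0) ∧
      ∀ g : Lp ℂ q (μ.prod ν), φ (pairingL hconj θ g) = 0 := by
  set lam : Fin k → ℂ := fun i => φ (Pi.single i 1) with hlam
  set Θ : Lp ℂ q' (μ.prod ν) := ∑ i, lam i • θ i with hΘdef
  have hΘt : ∀ u : Lp ℂ q (μ.prod ν),
      φ (pairingL hconj θ u) = ∫ z, (Θ : X × Y → ℂ) z * (u : X × Y → ℂ) z ∂(μ.prod ν) := by
    intro u
    rw [dual_expand φ (pairingL hconj θ u), hΘdef,
      pairing_sum hconj Finset.univ (fun i => lam i • θ i) u]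
    refine Finset.sum_congr rfl fun i _ => ?_
    rw [pairing_smul hconj, pairingL_apply, mul_comm]
  have hΘ0 : Θ = 0 := by
    refine sep hq'0 hq'top Θ fun A B hA hB hμA hνB => ?_
    have hAB : (μ.prod ν) (A ×ˢ B) ≠ ∞ := by
      rw [Measure.prod_prod]
      exact ENNReal.mul_ne_top hμA hνB
    set t := indicatorConstLp q (hA.prod hB) hAB (1 : ℂ) with ht
    have h1 : ∫ z in A ×ˢ B, (Θ : X × Y → ℂ) z ∂(μ.prod ν)
        = ∫ z, (Θ : X × Y → ℂ) z * (t : X × Y → ℂ) z ∂(μ.prod ν) := by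
      rw [← integral_indicator (hA.prod hB)]
      refine integral_congr_ae ?_
      filter_upwards [indicatorConstLp_coeFn (p := q) (hs := hA.prod hB) (hμs := hAB)
        (c := (1:ℂ))] with z hz
      rw [hz]
      by_cases hmem : z ∈ A ×ˢ B <;> simp [Set.indicator, hmem]
    rw [h1, ← hΘt t]
    exact hφ t (indicator_mem_tSet hA hB hμA hνB hAB)
  constructor
  · exact hΘ0
  · intro g
    rw [hΘt g, hΘ0]
    have : ∀ᵐ z ∂(μ.prod ν), ((0 : Lp ℂ q' (μ.prod ν)) : X × Y → ℂ) z
        * (g : X × Y → ℂ) z = 0 := by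
      filter_upwards [Lp.coeFn_zero ℂ q' (μ.prod ν)] with z hz
      rw [hz]; simp
    rw [integral_congr_ae this, integral_zero]

theorem pairing_mem_map {q q' : ℝ≥0∞} [Fact (1 ≤ q)] [Fact (1 ≤ q')]
    (hconj : 1 / q + 1 / q' = 1) (hq'0 : q' ≠ 0) (hq'top : q' ≠ ⊤)
    {k : ℕ} (θ : Fin k → Lp ℂ q' (μ.prod ν)) (g : Lp ℂ q (μ.prod ν)) :
    pairingL hconj θ g ∈ (Submodule.span ℂ (tSet μ ν q)).map (pairingL hconj θ) := by
  rw [← Subspace.forall_mem_dualAnnihilator_apply_eq_zero_iff]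
  intro φ hφ
  refine (annihilator_vanish hconj hq'0 hq'top θ φ fun t ht => ?_).2 g
  exact (Submodule.mem_dualAnnihilator φ).1 hφ _
    (Submodule.mem_map_of_mem (Submodule.subset_span ht))

theorem pairing_map_top {q q' : ℝ≥0∞} [Fact (1 ≤ q)] [Fact (1 ≤ q')]
    (hconj : 1 / q + 1 / q' = 1) (hq'0 : q' ≠ 0) (hq'top : q' ≠ ⊤)
    {k : ℕ} {θ : Fin k → Lp ℂ q' (μ.prod ν)} (hind : LinearIndependent ℂ θ) :
    (Submodule.span ℂ (tSet μ ν q)).map (pairingL hconj θ) = ⊤ := by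
  rw [Submodule.eq_top_iff']
  intro x
  rw [← Subspace.forall_mem_dualAnnihilator_apply_eq_zero_iff]
  intro φ hφ
  have h0 := (annihilator_vanish hconj hq'0 hq'top θ φ fun t ht =>
    (Submodule.mem_dualAnnihilator φ).1 hφ _
      (Submodule.mem_map_of_mem (Submodule.subset_span ht))).1
  have hlam : ∀ i, φ (Pi.single i 1) = 0 :=
    Fintype.linearIndependent_iff.1 hind _ h0
  rw [dual_expand φ x]
  simp [hlam]

theorem tensor_rep {q q' : ℝ≥0∞} [Fact (1 ≤ q)] [Fact (1 ≤ q')]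
    {t : Lp ℂ q' (μ.prod ν)} (ht : t ∈ tSet μ ν q') (r : ℂ) :
    ∃ (a : Lp ℂ q' μ) (b : Lp ℂ q' ν), ∀ u : Lp ℂ q (μ.prod ν),
      r * ∫ z, (t : X × Y → ℂ) z * (u : X × Y → ℂ) z ∂(μ.prod ν)
        = ∫ z, ((a : X → ℂ) z.1 * (b : Y → ℂ) z.2) * (u : X × Y → ℂ) z ∂(μ.prod ν) := by
  obtain ⟨a₀, b₀, hab⟩ := ht
  refine ⟨r • a₀, b₀, fun u => ?_⟩
  have hsm : (fun z : X × Y => ((r • a₀ : Lp ℂ q' μ) : X → ℂ) z.1) =ᵐ[μ.prod ν]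
      fun z : X × Y => r * (a₀ : X → ℂ) z.1 := by
    have h₀ : (fun x => ((r • a₀ : Lp ℂ q' μ) : X → ℂ) x) =ᵐ[μ]
        fun x => r * (a₀ : X → ℂ) x := by
      filter_upwards [Lp.coeFn_smul r a₀] with x hx
      rw [hx, Pi.smul_apply, smul_eq_mul]
    exact MeasureTheory.Measure.quasiMeasurePreserving_fst.ae_eq_comp h₀
  have : ∀ᵐ z ∂(μ.prod ν),
      (((r • a₀ : Lp ℂ q' μ) : X → ℂ) z.1 * (b₀ : Y → ℂ) z.2) * (u : X × Y → ℂ) z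
        = r * ((t : X × Y → ℂ) z * (u : X × Y → ℂ) z) := by
    filter_upwards [hsm, hab] with z hz habz
    rw [hz, habz]; ring
  rw [integral_congr_ae this, integral_const_mul]

end Prod

theorem stmt_2 {X Y : Type*} [MeasurableSpace X] [MeasurableSpace Y]
    (μ : Measure X) (ν : Measure Y) [SigmaFinite μ] [SigmaFinite ν]
    (p p' : ℝ≥0∞) [Fact (1 ≤ p)] (hp : 1 < p) (hptop : p ≠ ⊤)
    (hpp' : 1 / p + 1 / p' = 1)
    (T : Lp ℂ p (μ.prod ν) →L[ℂ] Lp ℂ p (μ.prod ν))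
    (ε : ℝ) (hε : 0 < ε) (m : ℕ)
    (ζ : Fin m → Lp ℂ p' (μ.prod ν)) (η : Fin m → Lp ℂ p (μ.prod ν)) :
    ∃ (n : ℕ) (a : Fin n → Lp ℂ p' μ) (b : Fin n → Lp ℂ p' ν)
      (c : Fin n → Lp ℂ p μ) (d : Fin n → Lp ℂ p ν),
      ∀ l : Fin m,
        ‖(∫ z, (ζ l : X × Y → ℂ) z * (T (η l) : X × Y → ℂ) z ∂(μ.prod ν)) -
          ∑ i : Fin n,
            (∫ z, ((a i : X → ℂ) z.1 * (b i : Y → ℂ) z.2) * (η l : X × Y → ℂ) z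
              ∂(μ.prod ν)) *
            (∫ z, (ζ l : X × Y → ℂ) z * ((c i : X → ℂ) z.1 * (d i : Y → ℂ) z.2)
              ∂(μ.prod ν))‖ < ε := by
  classical
  obtain ⟨hp'1, hp'top⟩ := conj_facts hp hptop hpp'
  haveI : Fact (1 ≤ p') := ⟨hp'1.le⟩
  have hp0 : p ≠ 0 := (zero_lt_one.trans hp).ne'
  have hp'0 : p' ≠ 0 := (zero_lt_one.trans hp'1).ne'
  have hconj' : 1 / p' + 1 / p = 1 := by rw [add_comm]; exact hpp'
  have hcomm : ∀ (f g : X × Y → ℂ),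
      ∫ z, f z * g z ∂(μ.prod ν) = ∫ z, g z * f z ∂(μ.prod ν) := fun f g =>
    integral_congr_ae (Filter.Eventually.of_forall fun z => mul_comm _ _)
  -- finite dimensional span of the η's
  set E : Submodule ℂ (Lp ℂ p (μ.prod ν)) := Submodule.span ℂ (Set.range η) with hE
  haveI : FiniteDimensional ℂ E := FiniteDimensional.span_of_finite ℂ (Set.finite_range η)
  set r : ℕ := Module.finrank ℂ E with hr
  set e : Module.Basis (Fin r) ℂ E := Module.finBasis ℂ E with he
  set θ₁ : Fin r → Lp ℂ p (μ.prod ν) := fun j => ((e j : E) : Lp ℂ p (μ.prod ν)) with hθ₁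
  have hind : LinearIndependent ℂ θ₁ :=
    e.linearIndependent.map' E.subtype (Submodule.ker_subtype E)
  -- dual family w k in the tensor span of L^{p'}
  have htop := pairing_map_top (μ := μ) (ν := ν) hconj' hp0 hptop hind
  have hsingle : ∀ k : Fin r, ∃ w, w ∈ Submodule.span ℂ (tSet μ ν p') ∧
      pairingL hconj' θ₁ w = Pi.single k 1 := by
    intro k
    have : (Pi.single k 1 : Fin r → ℂ) ∈
        (Submodule.span ℂ (tSet μ ν p')).map (pairingL hconj' θ₁) := by
      rw [htop]; trivial
    obtain ⟨w, hw1, hw2⟩ := Submodule.mem_map.1 this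
    exact ⟨w, hw1, hw2⟩
  choose w hwmem hwval using hsingle
  -- tensor-span realisations g k of T (θ₁ k) against the ζ's
  have hgex : ∀ k : Fin r, ∃ g, g ∈ Submodule.span ℂ (tSet μ ν p) ∧
      pairingL hpp' ζ g = pairingL hpp' ζ (T (θ₁ k)) := by
    intro k
    obtain ⟨g, hg1, hg2⟩ := Submodule.mem_map.1
      (pairing_mem_map hpp' hp'0 hp'top ζ (T (θ₁ k)))
    exact ⟨g, hg1, hg2⟩
  choose g hgmem hgval using hgex
  -- basis representation of η l
  have hηE : ∀ l, η l ∈ E := fun l => Submodule.subset_span (Set.mem_range_self l)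
  set ηE : Fin m → E := fun l => ⟨η l, hηE l⟩ with hηEdef
  set crep : Fin m → Fin r → ℂ := fun l j => e.repr (ηE l) j with hcrep
  have hrepr : ∀ l, η l = ∑ j, crep l j • θ₁ j := by
    intro l
    have h0 : (∑ j, e.repr (ηE l) j • e j) = ηE l := e.sum_repr (ηE l)
    have := congrArg (E.subtype) h0
    have h1 := this.symm
    rw [map_sum] at h1
    exact h1
  -- the pairing of w k with η l gives the coordinates
  have hA : ∀ l k, ∫ z, (w k : X × Y → ℂ) z * (η l : X × Y → ℂ) z ∂(μ.prod ν)
      = crep l k := by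
    intro l k
    rw [hcomm]
    conv_lhs => rw [hrepr l]
    rw [pairing_sum hconj' Finset.univ (fun j => crep l j • θ₁ j) (w k)]
    have hterm : ∀ j, ∫ z, ((crep l j • θ₁ j : Lp ℂ p (μ.prod ν)) : X × Y → ℂ) z
        * (w k : X × Y → ℂ) z ∂(μ.prod ν) = crep l j * (Pi.single k (1:ℂ) : Fin r → ℂ) j := by
      intro j
      rw [pairing_smul hconj']
      congr 1
      have := congrFun (hwval k) j
      rw [pairingL_apply] at this
      exact this
    rw [Finset.sum_congr rfl fun j _ => hterm j]
    rw [Finset.sum_eq_single k (fun j _ hjk => by simp [Pi.single_apply, hjk]) (by simp)]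
    simp
  -- the pairing of ζ l with g k
  have hB : ∀ l k, ∫ z, (ζ l : X × Y → ℂ) z * (g k : X × Y → ℂ) z ∂(μ.prod ν)
      = ∫ z, (ζ l : X × Y → ℂ) z * (T (θ₁ k) : X × Y → ℂ) z ∂(μ.prod ν) := by
    intro l k
    have := congrFun (hgval k) l
    rw [pairingL_apply, pairingL_apply] at this
    exact this
  -- main exact identity
  have hmain : ∀ l, ∫ z, (ζ l : X × Y → ℂ) z * (T (η l) : X × Y → ℂ) z ∂(μ.prod ν)
      = ∑ k, (∫ z, (w k : X × Y → ℂ) z * (η l : X × Y → ℂ) z ∂(μ.prod ν))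
        * ∫ z, (ζ l : X × Y → ℂ) z * (g k : X × Y → ℂ) z ∂(μ.prod ν) := by
    intro l
    have hT : T (η l) = ∑ k, crep l k • T (θ₁ k) := by
      conv_lhs => rw [hrepr l]
      rw [map_sum]
      exact Finset.sum_congr rfl fun k _ => T.map_smul _ _
    rw [hT, hcomm]
    rw [pairing_sum hconj' Finset.univ (fun k => crep l k • T (θ₁ k)) (ζ l)]
    refine Finset.sum_congr rfl fun k _ => ?_
    rw [pairing_smul hconj', hA, hB, hcomm]
  -- expand w k and g k into finite sums of elementary tensors
  have hwrep := fun k => Submodule.mem_span_set.1 (hwmem k)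
  choose F hFsub hFsum using hwrep
  have hgrep := fun k => Submodule.mem_span_set.1 (hgmem k)
  choose G hGsub hGsum using hgrep
  have hwint : ∀ k (u : Lp ℂ p (μ.prod ν)),
      ∫ z, (w k : X × Y → ℂ) z * (u : X × Y → ℂ) z ∂(μ.prod ν)
        = ∑ t ∈ (F k).support, (F k) t *
            ∫ z, (t : X × Y → ℂ) z * (u : X × Y → ℂ) z ∂(μ.prod ν) := by
    intro k u
    conv_lhs => rw [← hFsum k]
    rw [Finsupp.sum, pairing_sum hpp' ((F k).support) (fun t => (F k) t • t) u]
    exact Finset.sum_congr rfl fun t _ => pairing_smul hpp' _ _ _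
  have hgint : ∀ k (u : Lp ℂ p' (μ.prod ν)),
      ∫ z, (g k : X × Y → ℂ) z * (u : X × Y → ℂ) z ∂(μ.prod ν)
        = ∑ s ∈ (G k).support, (G k) s *
            ∫ z, (s : X × Y → ℂ) z * (u : X × Y → ℂ) z ∂(μ.prod ν) := by
    intro k u
    conv_lhs => rw [← hGsum k]
    rw [Finsupp.sum, pairing_sum hconj' ((G k).support) (fun s => (G k) s • s) u]
    exact Finset.sum_congr rfl fun s _ => pairing_smul hconj' _ _ _
  -- choose tensor factors
  have htF : ∀ (k : Fin r) (t : (F k).support),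
      ∃ (a : Lp ℂ p' μ) (b : Lp ℂ p' ν), ∀ u : Lp ℂ p (μ.prod ν),
        (F k) t.1 * ∫ z, (t.1 : X × Y → ℂ) z * (u : X × Y → ℂ) z ∂(μ.prod ν)
          = ∫ z, ((a : X → ℂ) z.1 * (b : Y → ℂ) z.2) * (u : X × Y → ℂ) z ∂(μ.prod ν) :=
    fun k t => tensor_rep (hFsub k t.2) ((F k) t.1)
  choose aF bF haF using htF
  have hsG : ∀ (k : Fin r) (s : (G k).support),
      ∃ (c : Lp ℂ p μ) (d : Lp ℂ p ν), ∀ u : Lp ℂ p' (μ.prod ν),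
        (G k) s.1 * ∫ z, (s.1 : X × Y → ℂ) z * (u : X × Y → ℂ) z ∂(μ.prod ν)
          = ∫ z, ((c : X → ℂ) z.1 * (d : Y → ℂ) z.2) * (u : X × Y → ℂ) z ∂(μ.prod ν) :=
    fun k s => tensor_rep (hGsub k s.2) ((G k) s.1)
  choose cG dG hcG using hsG
  -- flatten the index
  set I := (k : Fin r) × ((F k).support × (G k).support) with hI
  set n : ℕ := Fintype.card I with hn
  set eqv : I ≃ Fin n := Fintype.equivFin I with heqv
  refine ⟨n, fun i => aF (eqv.symm i).1 (eqv.symm i).2.1,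
    fun i => bF (eqv.symm i).1 (eqv.symm i).2.1,
    fun i => cG (eqv.symm i).1 (eqv.symm i).2.2,
    fun i => dG (eqv.symm i).1 (eqv.symm i).2.2, fun l => ?_⟩
  set P : I → ℂ := fun σ =>
    (∫ z, ((aF σ.1 σ.2.1 : X → ℂ) z.1 * (bF σ.1 σ.2.1 : Y → ℂ) z.2)
        * (η l : X × Y → ℂ) z ∂(μ.prod ν)) *
    (∫ z, (ζ l : X × Y → ℂ) z * ((cG σ.1 σ.2.2 : X → ℂ) z.1
        * (dG σ.1 σ.2.2 : Y → ℂ) z.2) ∂(μ.prod ν)) with hP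
  have h1 : (∑ i : Fin n,
      (∫ z, ((aF (eqv.symm i).1 (eqv.symm i).2.1 : X → ℂ) z.1
          * (bF (eqv.symm i).1 (eqv.symm i).2.1 : Y → ℂ) z.2)
          * (η l : X × Y → ℂ) z ∂(μ.prod ν)) *
        (∫ z, (ζ l : X × Y → ℂ) z * ((cG (eqv.symm i).1 (eqv.symm i).2.2 : X → ℂ) z.1
          * (dG (eqv.symm i).1 (eqv.symm i).2.2 : Y → ℂ) z.2) ∂(μ.prod ν)))
      = ∑ σ : I, P σ :=
    Fintype.sum_equiv eqv.symm _ _ (fun i => rfl)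
  have h2 : (∑ σ : I, P σ)
      = ∫ z, (ζ l : X × Y → ℂ) z * (T (η l) : X × Y → ℂ) z ∂(μ.prod ν) := by
    rw [← Finset.univ_sigma_univ, Finset.sum_sigma, hmain l]
    refine Finset.sum_congr rfl fun k _ => ?_
    calc ∑ x : (F k).support × (G k).support, P ⟨k, x⟩
        = ∑ t : (F k).support, ∑ s : (G k).support, P ⟨k, (t, s)⟩ :=
          Fintype.sum_prod_type (f := fun x => P ⟨k, x⟩)
      _ = ∑ t : (F k).support, ∑ s : (G k).support,
            ((F k) t.1 * ∫ z, (t.1 : X × Y → ℂ) z * (η l : X × Y → ℂ) z ∂(μ.prod ν)) *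
            ((G k) s.1 * ∫ z, (s.1 : X × Y → ℂ) z * (ζ l : X × Y → ℂ) z ∂(μ.prod ν)) := by
          refine Finset.sum_congr rfl fun t _ => Finset.sum_congr rfl fun s _ => ?_
          simp only [hP]
          congr 1
          · exact (haF k t (η l)).symm
          · rw [hcomm ((ζ l : X × Y → ℂ)) _]
            exact (hcG k s (ζ l)).symm
      _ = (∑ t : (F k).support,
            (F k) t.1 * ∫ z, (t.1 : X × Y → ℂ) z * (η l : X × Y → ℂ) z ∂(μ.prod ν)) *
          (∑ s : (G k).support,
            (G k) s.1 * ∫ z, (s.1 : X × Y → ℂ) z * (ζ l : X × Y → ℂ) z ∂(μ.prod ν)) :=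
          (Fintype.sum_mul_sum _ _).symm
      _ = (∫ z, (w k : X × Y → ℂ) z * (η l : X × Y → ℂ) z ∂(μ.prod ν)) *
          ∫ z, (ζ l : X × Y → ℂ) z * (g k : X × Y → ℂ) z ∂(μ.prod ν) := by
          rw [hwint k (η l), hcomm ((ζ l : X × Y → ℂ)) ((g k : X × Y → ℂ)),
            hgint k (ζ l)]
          exact congrArg₂ (· * ·)
            (Finset.sum_coe_sort ((F k).support) (fun t => (F k) t *
              ∫ z, (t : X × Y → ℂ) z * (η l : X × Y → ℂ) z ∂(μ.prod ν)))
            (Finset.sum_coe_sort ((G k).support) (fun s => (G k) s *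
              ∫ z, (s : X × Y → ℂ) z * (ζ l : X × Y → ℂ) z ∂(μ.prod ν)))
  rw [h1, h2]
  simpa using hε
end

section
/- Let G be a locally compact Hausdorff topological group with left Haar measure μ, N a closed normal subgroup with left Haar measure λ_N, π : G → G/N the quotient homomorphism, and ν a measure on G/N satisfying Weil's formula: for every measurable f : G → [0, ∞] and every measurable g : G/N → [0, ∞] such that g(π(s)) = ∫_N f(s n) dλ_N(n) for every s ∈ G, one has ∫_G f dμ = ∫_{G/N} g dν. Let 1 < p < ∞ with conjugate exponent p′, let K ⊆ G be compact, let f : G → ℂ be continuous with compact support contained in K, and let φ : G → ℝ be continuous with compact support and φ = 1 on K. Let g : G/N → ℂ be a measurable function with g(π(s)) = ∫_N f(s n) dλ_N(n) for every s ∈ G. Then C := sup_{s ∈ G} ( ∫_N |φ(s n)|^p dλ_N(n) )^{1/p} is finite and ( ∫_{G/N} |g|^{p′} dν )^{1/p′} ≤ C · ( ∫_G |f|^{p′} dμ )^{1/p′}. -/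
open MeasureTheory
open scoped ENNReal Pointwise Topology

section Aux

variable {G : Type*} [Group G] [TopologicalSpace G] [IsTopologicalGroup G]
    [LocallyCompactSpace G] [T2Space G] [MeasurableSpace G] [BorelSpace G]

instance auxBorel (N : Subgroup G) : BorelSpace ↥N := Subtype.borelSpace _

lemma aux_compact_preimage (N : Subgroup G) (hNc : IsClosed (N : Set G))
    (S : Set G) (hS : IsCompact S) :
    IsCompact ((Subtype.val : ↥N → G) ⁻¹' S) :=
  hNc.isClosedEmbedding_subtypeVal.isCompact_preimage hS

lemma aux_hcs (N : Subgroup G) (hNc : IsClosed (N : Set G))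
    {E : Type*} [NormedAddCommGroup E]
    (u : G → E) (huCS : HasCompactSupport u) (s : G) :
    HasCompactSupport fun n : ↥N => u (s * ↑n) := by
  apply HasCompactSupport.intro
    (aux_compact_preimage N hNc ((fun x : G => s * x) ⁻¹' tsupport u)
      (((Homeomorph.mulLeft s).isCompact_preimage).mpr huCS))
  intro n hn
  exact image_eq_zero_of_notMem_tsupport hn

lemma aux_integrable (N : Subgroup G) (hNc : IsClosed (N : Set G))
    (lamN : Measure ↥N) [lamN.IsHaarMeasure]
    {E : Type*} [NormedAddCommGroup E] [NormedSpace ℝ E]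
    (u : G → E) (huc : Continuous u) (huCS : HasCompactSupport u) (s : G) :
    Integrable (fun n : ↥N => u (s * ↑n)) lamN :=
  (huc.comp (continuous_const.mul continuous_subtype_val)).integrable_of_hasCompactSupport
    (aux_hcs N hNc u huCS s)

lemma aux_cont (N : Subgroup G) (hNc : IsClosed (N : Set G))
    (lamN : Measure ↥N) [lamN.IsHaarMeasure]
    {E : Type*} [NormedAddCommGroup E] [NormedSpace ℝ E]
    (u : G → E) (huc : Continuous u) (huCS : HasCompactSupport u) :
    Continuous fun s : G => ∫ n : ↥N, u (s * ↑n) ∂lamN := by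
  rw [continuous_iff_continuousAt]
  intro s₀
  obtain ⟨V, hVcomp, hVmem⟩ := exists_compact_mem_nhds s₀
  have hWcomp : IsCompact ((Subtype.val : ↥N → G) ⁻¹' (V⁻¹ * tsupport u)) :=
    aux_compact_preimage N hNc _ (hVcomp.inv.mul huCS)
  refine ContinuousOn.continuousAt ?_ hVmem
  apply continuousOn_integral_of_compact_support hWcomp
  · exact (huc.comp ((continuous_fst.mul
      (continuous_subtype_val.comp continuous_snd)))).continuousOn
  · intro s n hs hn
    by_contra h
    refine hn ?_
    have he : (s⁻¹ : G) * (s * ↑n) = ↑n := by group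
    show (n : G) ∈ V⁻¹ * tsupport u
    rw [← he]
    exact Set.mul_mem_mul (Set.inv_mem_inv.mpr hs) (subset_tsupport _ h)

end Aux

theorem stmt_11 {G : Type*} [Group G] [TopologicalSpace G] [IsTopologicalGroup G]
    [LocallyCompactSpace G] [T2Space G] [MeasurableSpace G] [BorelSpace G]
    (N : Subgroup G) [N.Normal] (hNc : IsClosed (N : Set G))
    [MeasurableSpace (G ⧸ N)]
    (μ : Measure G) [μ.IsHaarMeasure]
    (lamN : Measure ↥N) [lamN.IsHaarMeasure]
    (ν : Measure (G ⧸ N))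
    (hWeil : ∀ f : G → ℝ≥0∞, Measurable f → ∀ g : G ⧸ N → ℝ≥0∞, Measurable g →
      (∀ s : G, g (QuotientGroup.mk s) = ∫⁻ n : ↥N, f (s * ↑n) ∂lamN) →
      ∫⁻ x, f x ∂μ = ∫⁻ y, g y ∂ν)
    (p p' : ℝ≥0∞) (hp : 1 < p) (hptop : p ≠ ⊤) (hpp' : 1 / p + 1 / p' = 1)
    (K : Set G) (hKcomp : IsCompact K)
    (f : G → ℂ) (hfc : Continuous f) (hfsupp : Function.support f ⊆ K)
    (φ : G → ℝ) (hφc : Continuous φ) (hφsupp : HasCompactSupport φ)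
    (hφ1 : ∀ x ∈ K, φ x = 1)
    (g : G ⧸ N → ℂ) (hgm : Measurable g)
    (hg : ∀ s : G, g (QuotientGroup.mk s) = ∫ n : ↥N, f (s * ↑n) ∂lamN) :
    (⨆ s : G, (∫⁻ n : ↥N, ENNReal.ofReal (|φ (s * ↑n)| ^ p.toReal) ∂lamN)
        ^ (1 / p.toReal)) ≠ ⊤ ∧
    eLpNorm g p' ν ≤
      (⨆ s : G, (∫⁻ n : ↥N, ENNReal.ofReal (|φ (s * ↑n)| ^ p.toReal) ∂lamN)
        ^ (1 / p.toReal)) * eLpNorm f p' μ := by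
  -- exponent bookkeeping
  have hp0 : p ≠ 0 := (zero_lt_one.trans hp).ne'
  have hr1 : 1 < p.toReal := by
    have := (ENNReal.toReal_lt_toReal (by simp) hptop).mpr hp
    simpa using this
  have hrpos : 0 < p.toReal := zero_lt_one.trans hr1
  have hp'netop : p' ≠ ⊤ := by
    intro h
    rw [h] at hpp'
    simp only [one_div, ENNReal.inv_top, add_zero, ENNReal.inv_eq_one] at hpp'
    exact hp.ne' hpp'
  have hp'ne0 : p' ≠ 0 := by
    intro h
    rw [h] at hpp'
    simp at hpp'
  have hsum : 1 / p.toReal + 1 / p'.toReal = 1 := by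
    have h2 := congrArg ENNReal.toReal hpp'
    rw [ENNReal.toReal_add] at h2
    · simpa only [one_div, ENNReal.toReal_inv, ENNReal.toReal_one] using h2
    · simp only [one_div, Ne, ENNReal.inv_eq_top]; exact hp0
    · simp only [one_div, Ne, ENNReal.inv_eq_top]; exact hp'ne0
  have hconj : p.toReal.HolderConjugate p'.toReal :=
    Real.holderConjugate_iff.mpr ⟨hr1, by simpa [one_div] using hsum⟩
  set r := p.toReal with hrdef
  set r' := p'.toReal with hr'def
  have hr'pos : 0 < r' := hconj.symm.pos
  -- compact support of f
  have hfCS : HasCompactSupport f := HasCompactSupport.intro hKcomp fun x hx => by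
    by_contra h
    exact hx (hfsupp h)
  -- the averaged function q = g ∘ π
  set q : G → ℂ := fun s => ∫ n : ↥N, f (s * ↑n) ∂lamN with hqdef
  have hqg : ∀ s : G, q s = g (QuotientGroup.mk s) := fun s => (hg s).symm
  have hqc : Continuous q := aux_cont N hNc lamN f hfc hfCS
  -- A
  set A : G → ℝ≥0∞ := fun s => ∫⁻ n : ↥N, (‖f (s * ↑n)‖₊ : ℝ≥0∞) ^ r' ∂lamN with hAdef
  have hnormrc : Continuous fun x : G => ‖f x‖ ^ r' :=
    hfc.norm.rpow_const fun x => Or.inr hr'pos.le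
  have hnormrCS : HasCompactSupport fun x : G => ‖f x‖ ^ r' := by
    have : HasCompactSupport fun x : G => ‖f x‖ := hfCS.norm
    exact this.comp_left (g := fun t : ℝ => t ^ r') (Real.zero_rpow hr'pos.ne')
  have hAeq : ∀ s : G, A s = ENNReal.ofReal (∫ n : ↥N, ‖f (s * ↑n)‖ ^ r' ∂lamN) := by
    intro s
    rw [ofReal_integral_eq_lintegral_ofReal
      (aux_integrable N hNc lamN _ hnormrc hnormrCS s)
      (Filter.Eventually.of_forall fun n => Real.rpow_nonneg (norm_nonneg _) _)]
    refine lintegral_congr fun n => ?_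
    rw [← ENNReal.ofReal_rpow_of_nonneg (norm_nonneg _) hr'pos.le, ofReal_norm, enorm_eq_nnnorm]
  have hAc : Continuous fun s => (∫ n : ↥N, ‖f (s * ↑n)‖ ^ r' ∂lamN) :=
    aux_cont N hNc lamN _ hnormrc hnormrCS
  have hAm : Measurable A := by
    have : A = fun s => ENNReal.ofReal (∫ n : ↥N, ‖f (s * ↑n)‖ ^ r' ∂lamN) := funext hAeq
    rw [this]
    exact ENNReal.measurable_ofReal.comp hAc.measurable
  have hAtop : ∀ s, A s ≠ ⊤ := fun s => by rw [hAeq s]; exact ENNReal.ofReal_ne_top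
  -- A vanishing implies f vanishes on the coset
  have hAzero : ∀ s : G, A s = 0 → ∀ n : ↥N, f (s * ↑n) = 0 := by
    intro s hA0 n₀
    by_contra hne
    have hvm : Measurable fun n : ↥N => (‖f (s * ↑n)‖₊ : ℝ≥0∞) ^ r' :=
      ((hfc.comp (continuous_const.mul continuous_subtype_val)).measurable.enorm).pow_const _
    have hU : 0 < lamN (Function.support fun n : ↥N => (‖f (s * ↑n)‖₊ : ℝ≥0∞) ^ r') := by
      have hUopen : IsOpen {n : ↥N | f (s * ↑n) ≠ 0} :=
        isOpen_compl_iff.mpr (isClosed_singleton.preimage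
          (hfc.comp (continuous_const.mul continuous_subtype_val)))
      have hsub : {n : ↥N | f (s * ↑n) ≠ 0} ⊆
          Function.support fun n : ↥N => (‖f (s * ↑n)‖₊ : ℝ≥0∞) ^ r' := by
        intro n hn
        simp only [Function.mem_support]
        intro h
        apply hn
        have := (ENNReal.rpow_eq_zero_iff.mp h)
        rcases this with ⟨h1, _⟩ | ⟨h1, h2⟩
        · simpa using h1
        · exact absurd h1 ENNReal.coe_ne_top
      calc 0 < lamN {n : ↥N | f (s * ↑n) ≠ 0} := hUopen.measure_pos lamN ⟨n₀, hne⟩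
        _ ≤ _ := measure_mono hsub
    rw [← lintegral_pos_iff_support hvm] at hU
    exact hU.ne' hA0
  -- invariance of A and q under right N-translation
  have hAinv : ∀ (s : G) (n₀ : ↥N), A (s * ↑n₀) = A s := by
    intro s n₀
    have h1 : ∀ n : ↥N, (‖f (s * ↑n₀ * ↑n)‖₊ : ℝ≥0∞) ^ r'
        = (fun m : ↥N => (‖f (s * ↑m)‖₊ : ℝ≥0∞) ^ r') (n₀ * n) := by
      intro n
      simp only [Subgroup.coe_mul, mul_assoc]
    calc A (s * ↑n₀) = ∫⁻ n : ↥N, (fun m : ↥N => (‖f (s * ↑m)‖₊ : ℝ≥0∞) ^ r') (n₀ * n) ∂lamN :=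
          lintegral_congr h1
      _ = ∫⁻ n : ↥N, (fun m : ↥N => (‖f (s * ↑m)‖₊ : ℝ≥0∞) ^ r') n ∂lamN :=
          lintegral_mul_left_eq_self (μ := lamN) (fun m : ↥N => (‖f (s * ↑m)‖₊ : ℝ≥0∞) ^ r') n₀
      _ = A s := rfl
  have hqinv : ∀ (s : G) (n₀ : ↥N), q (s * ↑n₀) = q s := by
    intro s n₀
    rw [hqg, hqg, QuotientGroup.mk_mul_of_mem s n₀.2]
  -- C
  set C : ℝ≥0∞ := ⨆ s : G,
    (∫⁻ n : ↥N, ENNReal.ofReal (|φ (s * ↑n)| ^ r) ∂lamN) ^ (1 / r) with hCdef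
  have hΦleC : ∀ s : G,
      (∫⁻ n : ↥N, ENNReal.ofReal (|φ (s * ↑n)| ^ r) ∂lamN) ^ (1 / r) ≤ C := fun s =>
    le_iSup (fun t : G => (∫⁻ n : ↥N, ENNReal.ofReal (|φ (t * ↑n)| ^ r) ∂lamN) ^ (1 / r)) s
  -- C is finite
  have hCtop : C ≠ ⊤ := by
    obtain ⟨Mφ, hMφ⟩ := hφsupp.exists_bound_of_continuous hφc
    have hMφ' : ∀ x, |φ x| ≤ Mφ := fun x => by simpa [Real.norm_eq_abs] using hMφ x
    have hScomp : IsCompact (tsupport φ) := hφsupp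
    set R : Set ↥N := (Subtype.val : ↥N → G) ⁻¹' ((tsupport φ)⁻¹ * tsupport φ) with hRdef
    have hRcomp : IsCompact R := aux_compact_preimage N hNc _ (hScomp.inv.mul hScomp)
    have hbound : ∀ s : G, (∫⁻ n : ↥N, ENNReal.ofReal (|φ (s * ↑n)| ^ r) ∂lamN)
        ≤ ENNReal.ofReal (Mφ ^ r) * lamN R := by
      intro s
      by_cases hTs : ∃ n₀ : ↥N, s * ↑n₀ ∈ tsupport φ
      · obtain ⟨n₀, hn₀⟩ := hTs
        set T : Set ↥N := {n : ↥N | s * ↑n ∈ tsupport φ} with hTdef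
        have hTmeas : MeasurableSet T :=
          (hScomp.isClosed.preimage (continuous_const.mul continuous_subtype_val)).measurableSet
        have h1 : (∫⁻ n : ↥N, ENNReal.ofReal (|φ (s * ↑n)| ^ r) ∂lamN)
            ≤ ∫⁻ n : ↥N, T.indicator (fun _ => ENNReal.ofReal (Mφ ^ r)) n ∂lamN := by
          refine lintegral_mono fun n => ?_
          by_cases hnT : n ∈ T
          · rw [Set.indicator_of_mem hnT]
            exact ENNReal.ofReal_le_ofReal
              (Real.rpow_le_rpow (abs_nonneg _) (hMφ' _) hrpos.le)
          · have h0 : φ (s * ↑n) = 0 := image_eq_zero_of_notMem_tsupport hnT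
            rw [Set.indicator_of_notMem hnT, h0, abs_zero, Real.zero_rpow hrpos.ne']
            simp
        rw [lintegral_indicator_const hTmeas] at h1
        refine h1.trans (mul_le_mul_right ?_ _)
        have hsub : T ⊆ (fun n : ↥N => n₀⁻¹ * n) ⁻¹' R := by
          intro n hn
          show ((n₀⁻¹ * n : ↥N) : G) ∈ (tsupport φ)⁻¹ * tsupport φ
          have he : ((n₀⁻¹ * n : ↥N) : G) = (s * ↑n₀)⁻¹ * (s * ↑n) := by
            push_cast
            group
          rw [he]
          exact Set.mul_mem_mul (Set.inv_mem_inv.mpr hn₀) hn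
        calc lamN T ≤ lamN ((fun n : ↥N => n₀⁻¹ * n) ⁻¹' R) := measure_mono hsub
          _ = lamN R := measure_preimage_mul lamN n₀⁻¹ R
      · push_neg at hTs
        have h0 : (∫⁻ n : ↥N, ENNReal.ofReal (|φ (s * ↑n)| ^ r) ∂lamN) = 0 := by
          have : ∀ n : ↥N, ENNReal.ofReal (|φ (s * ↑n)| ^ r) = 0 := by
            intro n
            rw [image_eq_zero_of_notMem_tsupport (hTs n), abs_zero,
              Real.zero_rpow hrpos.ne']
            simp
          simp only [this, lintegral_zero]
        rw [h0]
        exact zero_le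
    have hCle : C ≤ (ENNReal.ofReal (Mφ ^ r) * lamN R) ^ (1 / r) := by
      rw [hCdef]
      refine iSup_le fun s => ?_
      exact ENNReal.rpow_le_rpow (hbound s) (by positivity)
    exact ne_top_of_le_ne_top
      (ENNReal.rpow_ne_top_of_nonneg (by positivity)
        (ENNReal.mul_ne_top ENNReal.ofReal_ne_top hRcomp.measure_lt_top.ne)) hCle
  -- Hölder estimate
  have hHold : ∀ s : G, (‖q s‖₊ : ℝ≥0∞) ≤
      (A s) ^ (1 / r') * (∫⁻ n : ↥N, ENNReal.ofReal (|φ (s * ↑n)| ^ r) ∂lamN) ^ (1 / r) := by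
    intro s
    have h1 : (‖q s‖₊ : ℝ≥0∞) ≤ ∫⁻ n : ↥N, (‖f (s * ↑n)‖₊ : ℝ≥0∞) ∂lamN :=
      enorm_integral_le_lintegral_enorm _
    have h2 : (∫⁻ n : ↥N, (‖f (s * ↑n)‖₊ : ℝ≥0∞) ∂lamN)
        = ∫⁻ n : ↥N, ((fun m : ↥N => (‖f (s * ↑m)‖₊ : ℝ≥0∞)) *
            (fun m : ↥N => ENNReal.ofReal (|φ (s * ↑m)|))) n ∂lamN := by
      refine lintegral_congr fun n => ?_
      simp only [Pi.mul_apply]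
      by_cases h : f (s * ↑n) = 0
      · rw [h]; simp
      · rw [hφ1 _ (hfsupp h), abs_one, ENNReal.ofReal_one, mul_one]
    have hma : AEMeasurable (fun n : ↥N => (‖f (s * ↑n)‖₊ : ℝ≥0∞)) lamN :=
      ((hfc.comp (continuous_const.mul continuous_subtype_val)).measurable.enorm).aemeasurable
    have hmb : AEMeasurable (fun n : ↥N => ENNReal.ofReal (|φ (s * ↑n)|)) lamN :=
      (ENNReal.measurable_ofReal.comp
        ((hφc.comp (continuous_const.mul continuous_subtype_val)).abs.measurable)).aemeasurable
    have h3 := ENNReal.lintegral_mul_le_Lp_mul_Lq lamN hconj.symm hma hmb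
    refine h1.trans ?_
    rw [h2]
    refine h3.trans (le_of_eq ?_)
    congr 1
    congr 1
    exact lintegral_congr fun n =>
      ENNReal.ofReal_rpow_of_nonneg (abs_nonneg _) hrpos.le
  -- main auxiliary function F and the Weil pair
  set F : G → ℝ≥0∞ :=
    fun s => (‖q s‖₊ : ℝ≥0∞) ^ r' * ((‖f s‖₊ : ℝ≥0∞) ^ r' / A s) with hFdef
  have hFm : Measurable F := by
    refine Measurable.mul ?_ (Measurable.div ?_ hAm)
    · exact (hqc.measurable.enorm).pow_const _
    · exact (hfc.measurable.enorm).pow_const _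
  have hg5m : Measurable fun y : G ⧸ N => (‖g y‖₊ : ℝ≥0∞) ^ r' :=
    (hgm.enorm).pow_const _
  have hpair : ∀ s : G,
      (fun y : G ⧸ N => (‖g y‖₊ : ℝ≥0∞) ^ r') (QuotientGroup.mk s)
        = ∫⁻ n : ↥N, F (s * ↑n) ∂lamN := by
    intro s
    have hFs : ∀ n : ↥N, F (s * ↑n)
        = (‖q s‖₊ : ℝ≥0∞) ^ r' * ((‖f (s * ↑n)‖₊ : ℝ≥0∞) ^ r' / A s) := by
      intro n
      simp only [hFdef]
      rw [hqinv s n, hAinv s n]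
    simp only [hFs]
    rw [← hqg s]
    by_cases hA0 : A s = 0
    · have hq0 : q s = 0 := by
        have hz : ∀ n : ↥N, f (s * ↑n) = 0 := hAzero s hA0
        simp only [hqdef]
        rw [show (fun n : ↥N => f (s * ↑n)) = fun _ => (0 : ℂ) from funext hz]
        simp
      rw [hq0]
      simp [ENNReal.zero_rpow_of_pos hr'pos]
    · have hcne : ((‖q s‖₊ : ℝ≥0∞) ^ r') ≠ ⊤ :=
        ENNReal.rpow_ne_top_of_nonneg hr'pos.le ENNReal.coe_ne_top
      rw [lintegral_const_mul' _ _ hcne]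
      have hmid : (∫⁻ n : ↥N, (‖f (s * ↑n)‖₊ : ℝ≥0∞) ^ r' / A s ∂lamN)
          = A s * (A s)⁻¹ := by
        simp only [div_eq_mul_inv]
        rw [lintegral_mul_const' _ _ (ENNReal.inv_ne_top.mpr hA0)]
      rw [hmid, ENNReal.mul_inv_cancel hA0 (hAtop s), mul_one]
  have key : ∫⁻ x, F x ∂μ = ∫⁻ y, (‖g y‖₊ : ℝ≥0∞) ^ r' ∂ν :=
    hWeil F hFm _ hg5m hpair
  -- pointwise bound for F
  have hFle : ∀ s : G, F s ≤ C ^ r' * (‖f s‖₊ : ℝ≥0∞) ^ r' := by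
    intro s
    by_cases hA0 : A s = 0
    · have hf0 : f s = 0 := by
        have := hAzero s hA0 1
        simpa using this
      simp only [hFdef]
      rw [hf0]
      simp [ENNReal.zero_rpow_of_pos hr'pos]
    · have h1 : (‖q s‖₊ : ℝ≥0∞) ^ r' ≤ A s * C ^ r' := by
        have h2 : (‖q s‖₊ : ℝ≥0∞) ≤ (A s) ^ (1 / r') * C :=
          (hHold s).trans (mul_le_mul' le_rfl (hΦleC s))
        calc (‖q s‖₊ : ℝ≥0∞) ^ r' ≤ ((A s) ^ (1 / r') * C) ^ r' :=
              ENNReal.rpow_le_rpow h2 hr'pos.le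
          _ = ((A s) ^ (1 / r')) ^ r' * C ^ r' :=
              ENNReal.mul_rpow_of_nonneg _ _ hr'pos.le
          _ = A s * C ^ r' := by
              rw [← ENNReal.rpow_mul, one_div, inv_mul_cancel₀ hr'pos.ne', ENNReal.rpow_one]
      calc F s = (‖q s‖₊ : ℝ≥0∞) ^ r' * ((‖f s‖₊ : ℝ≥0∞) ^ r' * (A s)⁻¹) := by
            simp only [hFdef]
            rw [div_eq_mul_inv]
        _ ≤ (A s * C ^ r') * ((‖f s‖₊ : ℝ≥0∞) ^ r' * (A s)⁻¹) := mul_le_mul_left h1 _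
        _ = (C ^ r' * (‖f s‖₊ : ℝ≥0∞) ^ r') * (A s * (A s)⁻¹) := by ring
        _ = C ^ r' * (‖f s‖₊ : ℝ≥0∞) ^ r' := by
            rw [ENNReal.mul_inv_cancel hA0 (hAtop s), mul_one]
  refine ⟨hCtop, ?_⟩
  have hnormg : eLpNorm g p' ν = (∫⁻ y, (‖g y‖₊ : ℝ≥0∞) ^ r' ∂ν) ^ (1 / r') :=
    eLpNorm_eq_lintegral_rpow_enorm_toReal hp'ne0 hp'netop
  have hnormf : eLpNorm f p' μ = (∫⁻ x, (‖f x‖₊ : ℝ≥0∞) ^ r' ∂μ) ^ (1 / r') :=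
    eLpNorm_eq_lintegral_rpow_enorm_toReal hp'ne0 hp'netop
  rw [hnormg, hnormf, ← key]
  have hCr'top : C ^ r' ≠ ⊤ := ENNReal.rpow_ne_top_of_nonneg hr'pos.le hCtop
  have hle : ∫⁻ x, F x ∂μ ≤ C ^ r' * ∫⁻ x, (‖f x‖₊ : ℝ≥0∞) ^ r' ∂μ := by
    calc ∫⁻ x, F x ∂μ ≤ ∫⁻ x, C ^ r' * (‖f x‖₊ : ℝ≥0∞) ^ r' ∂μ := lintegral_mono hFle
      _ = C ^ r' * ∫⁻ x, (‖f x‖₊ : ℝ≥0∞) ^ r' ∂μ := lintegral_const_mul' _ _ hCr'top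
  calc (∫⁻ x, F x ∂μ) ^ (1 / r')
      ≤ (C ^ r' * ∫⁻ x, (‖f x‖₊ : ℝ≥0∞) ^ r' ∂μ) ^ (1 / r') :=
        ENNReal.rpow_le_rpow hle (by positivity)
    _ = (C ^ r') ^ (1 / r') * (∫⁻ x, (‖f x‖₊ : ℝ≥0∞) ^ r' ∂μ) ^ (1 / r') :=
        ENNReal.mul_rpow_of_nonneg _ _ (by positivity)
    _ = C * (∫⁻ x, (‖f x‖₊ : ℝ≥0∞) ^ r' ∂μ) ^ (1 / r') := by
        rw [← ENNReal.rpow_mul, mul_one_div, div_self hr'pos.ne', ENNReal.rpow_one]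
end

section
/- Let G be a locally compact Hausdorff topological group, H a closed subgroup with left Haar measure λ_H, q : G → (0, ∞) a continuous function, and 1 < p < ∞ with conjugate exponent p′. Let T be a bounded linear operator on L^p(H, λ_H) which commutes with every left translation λ_p^H(h), h ∈ H (where λ_p^H(h) f(k) = f(h^{-1} k)). For φ, ψ : G → ℂ continuous with compact support and x ∈ G, let φ_x, ψ_x ∈ C_c(H) be given by φ_x(h) = φ(x h) q(x h)^{-1/p} and ψ_x(h) = ψ(x h) q(x h)^{-1/p′}, and set F(x) = ∫_H ψ_x(h) · (T φ_x)(h) dλ_H(h). Then F(x h_0) = F(x) for every x ∈ G and every h_0 ∈ H; that is, F is constant on left cosets x H. -/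
open MeasureTheory
open scoped ENNReal

theorem stmt_12 {G : Type*} [Group G] [TopologicalSpace G] [IsTopologicalGroup G]
    [LocallyCompactSpace G] [T2Space G] [MeasurableSpace G] [BorelSpace G]
    (H : Subgroup G) (hHc : IsClosed (H : Set G))
    (lamH : Measure ↥H) [lamH.IsHaarMeasure]
    (q : G → ℝ) (hqc : Continuous q) (hqpos : ∀ x, 0 < q x)
    (p p' : ℝ≥0∞) [Fact (1 ≤ p)] (hp : 1 < p) (hptop : p ≠ ⊤)
    (hpp' : 1 / p + 1 / p' = 1)
    (T : Lp ℂ p lamH →L[ℂ] Lp ℂ p lamH)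
    (hT : ∀ (h : ↥H) (u v : Lp ℂ p lamH),
      ((v : ↥H → ℂ) =ᵐ[lamH] fun k => u (h⁻¹ * k)) →
      ((T v : ↥H → ℂ) =ᵐ[lamH] fun k => T u (h⁻¹ * k)))
    (φ ψ : G → ℂ) (hφc : Continuous φ) (hφs : HasCompactSupport φ)
    (hψc : Continuous ψ) (hψs : HasCompactSupport ψ)
    (x : G) (h₀ : ↥H)
    (u v : Lp ℂ p lamH)
    (hu : (u : ↥H → ℂ) =ᵐ[lamH]
      fun h => φ (x * ↑h) * ((q (x * ↑h) ^ (-(1 / p.toReal)) : ℝ) : ℂ))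
    (hv : (v : ↥H → ℂ) =ᵐ[lamH]
      fun h => φ (x * ↑h₀ * ↑h) * ((q (x * ↑h₀ * ↑h) ^ (-(1 / p.toReal)) : ℝ) : ℂ)) :
    (∫ h : ↥H, ψ (x * ↑h₀ * ↑h) * ((q (x * ↑h₀ * ↑h) ^ (-(1 / p'.toReal)) : ℝ) : ℂ) *
        (T v) h ∂lamH) =
      ∫ h : ↥H, ψ (x * ↑h) * ((q (x * ↑h) ^ (-(1 / p'.toReal)) : ℝ) : ℂ) *
        (T u) h ∂lamH := by
  haveI : BorelSpace ↥H := Subtype.borelSpace (H : Set G)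
  have hmp : MeasurePreserving (fun k : ↥H => h₀ * k) lamH lamH :=
    measurePreserving_mul_left lamH h₀
  have hu' : (fun k : ↥H => u (h₀ * k)) =ᵐ[lamH]
      fun k => φ (x * ↑h₀ * ↑k) * ((q (x * ↑h₀ * ↑k) ^ (-(1 / p.toReal)) : ℝ) : ℂ) := by
    have := hmp.quasiMeasurePreserving.ae_eq_comp hu
    simpa [Function.comp_def, mul_assoc] using this
  have hvu : (v : ↥H → ℂ) =ᵐ[lamH] fun k => u ((h₀⁻¹)⁻¹ * k) := by
    simpa using hv.trans hu'.symm
  have hTvu : (T v : ↥H → ℂ) =ᵐ[lamH] fun k => T u ((h₀⁻¹)⁻¹ * k) := hT h₀⁻¹ u v hvu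
  calc (∫ h : ↥H, ψ (x * ↑h₀ * ↑h) * ((q (x * ↑h₀ * ↑h) ^ (-(1 / p'.toReal)) : ℝ) : ℂ) *
        (T v) h ∂lamH)
      = ∫ h : ↥H, (fun k : ↥H => ψ (x * ↑k) * ((q (x * ↑k) ^ (-(1 / p'.toReal)) : ℝ) : ℂ) *
          (T u) k) (h₀ * h) ∂lamH := by
        refine integral_congr_ae ?_
        filter_upwards [hTvu] with h hh
        simp [hh, mul_assoc]
    _ = _ := integral_mul_left_eq_self
      (fun k : ↥H => ψ (x * ↑k) * ((q (x * ↑k) ^ (-(1 / p'.toReal)) : ℝ) : ℂ) * (T u) k) h₀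
end
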